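/- Let π ∈ Π(μ₀,μ₁) be equivalent to ρ = ℙ₀∘(X₀,X₁)^{-1} with ζ := (dπ/dρ)(X₀,X₁) satisfying E^{ℙ₀}[|ln ζ| + ζ²] < ∞, and let P̂ be defined by dP̂/dℙ₀ = ζ. Then P̂ is the unique minimizer of the relative entropy H(· | ℙ₀) over the set P_π := { ℙ ∈ P₂(μ₀,μ₁) : ℙ∘(X₀,X₁)^{-1} = π }, and its minimal value is H(P̂ | ℙ₀) = H(π | ρ). -/

import Mathlib

open MeasureTheory
open scoped ENNReal

/-- Relative entropy `H(μ|ν) := ∫ ln(dμ/dν) dμ` if `μ ≪ ν` (with the integral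
well defined), and `+∞` otherwise. -/
noncomputable def relEnt {Ω : Type*} [MeasurableSpace Ω] (μ ν : Measure Ω) : ℝ≥0∞ :=
  open Classical in
  if μ ≪ ν ∧ Integrable (llr μ ν) μ then ENNReal.ofReal (∫ ω, llr μ ν ω ∂μ) else ⊤

lemma auxS9_mul_abs_log_le {x : ℝ} (hx : 0 ≤ x) :
    x * |Real.log x| ≤ |Real.log x| + x ^ 2 := by
  rcases le_or_gt x 1 with h | h
  · nlinarith [abs_nonneg (Real.log x), sq_nonneg x,
      mul_le_of_le_one_left (abs_nonneg (Real.log x)) h]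
  · have hx0 : (0:ℝ) < x := lt_trans zero_lt_one h
    have hlog : Real.log x ≤ x := by
      nlinarith [Real.log_le_sub_one_of_pos hx0]
    have habs : |Real.log x| = Real.log x := abs_of_nonneg (Real.log_nonneg h.le)
    nlinarith [mul_le_mul_of_nonneg_left hlog hx0.le, abs_nonneg (Real.log x)]

lemma auxS9_llr_integral {α : Type*} [MeasurableSpace α] {μ ν : Measure α}
    [IsFiniteMeasure μ] [SigmaFinite ν] (hμν : μ ≪ ν)
    (hint : Integrable
      (fun x => (μ.rnDeriv ν x).toReal * |Real.log ((μ.rnDeriv ν x).toReal)|) ν) :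
    Integrable (llr μ ν) μ ∧
      ∫ x, llr μ ν x ∂μ
        = ∫ x, (μ.rnDeriv ν x).toReal * Real.log ((μ.rnDeriv ν x).toReal) ∂ν := by
  have hmeas : Measurable fun x => (μ.rnDeriv ν x).toReal :=
    (Measure.measurable_rnDeriv μ ν).ennreal_toReal
  have hint' : Integrable (fun x => (μ.rnDeriv ν x).toReal • llr μ ν x) ν := by
    refine hint.mono' ((hmeas.mul (measurable_llr μ ν)).aestronglyMeasurable) ?_
    refine Filter.Eventually.of_forall fun x => ?_
    rw [smul_eq_mul, Real.norm_eq_abs, abs_mul, abs_of_nonneg ENNReal.toReal_nonneg]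
    exact le_rfl
  refine ⟨(integrable_rnDeriv_smul_iff hμν).mp hint', ?_⟩
  rw [← integral_rnDeriv_smul hμν]
  simp only [llr, smul_eq_mul]

lemma auxS9_gibbs {α : Type*} [MeasurableSpace α] {P Q : Measure α}
    [IsProbabilityMeasure P] [IsProbabilityMeasure Q] (hPQ : P ≪ Q) (hQP : Q ≪ P)
    (hint : Integrable (llr P Q) P) :
    0 ≤ ∫ x, llr P Q x ∂P ∧ (∫ x, llr P Q x ∂P = 0 → P = Q) := by
  set k : α → ℝ := fun x => (Q.rnDeriv P x).toReal with hk
  have hk_int : Integrable k P := Measure.integrable_toReal_rnDeriv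
  have hk_mean : ∫ x, k x ∂P = 1 := by
    rw [hk, Measure.integral_toReal_rnDeriv hQP]
    simp
  have hk_pos : ∀ᵐ x ∂P, 0 < k x := by
    filter_upwards [Measure.rnDeriv_pos' hPQ, Measure.rnDeriv_lt_top Q P] with x h1 h2
    exact ENNReal.toReal_pos h1.ne' h2.ne
  have hlogk : (fun x => Real.log (k x)) =ᵐ[P] fun x => - llr P Q x := by
    filter_upwards [neg_llr hPQ] with x hx
    have : Real.log (k x) = llr Q P x := rfl
    rw [this, ← hx]; rfl
  have hlogk_int : Integrable (fun x => Real.log (k x)) P := hint.neg.congr hlogk.symm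
  have hφ_int : Integrable (fun x => k x - 1 - Real.log (k x)) P :=
    (hk_int.sub (integrable_const 1)).sub hlogk_int
  have hφ_nonneg : ∀ᵐ x ∂P, 0 ≤ k x - 1 - Real.log (k x) := by
    filter_upwards [hk_pos] with x hx
    have := Real.log_le_sub_one_of_pos hx
    linarith
  have hφ_eq : ∫ x, (k x - 1 - Real.log (k x)) ∂P = ∫ x, llr P Q x ∂P := by
    have h1 : ∫ x, (k x - 1 - Real.log (k x)) ∂P
        = (∫ x, (k x - 1) ∂P) - ∫ x, Real.log (k x) ∂P :=
      integral_sub (hk_int.sub (integrable_const 1)) hlogk_int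
    have h2 : ∫ x, (k x - 1) ∂P = (∫ x, k x ∂P) - ∫ (_ : α), (1:ℝ) ∂P :=
      integral_sub hk_int (integrable_const 1)
    have h3 : ∫ x, Real.log (k x) ∂P = ∫ x, - llr P Q x ∂P := integral_congr_ae hlogk
    rw [h1, h2, h3, hk_mean, integral_neg]
    simp
  constructor
  · rw [← hφ_eq]
    exact integral_nonneg_of_ae hφ_nonneg
  · intro h0
    have hφ0 : (fun x => k x - 1 - Real.log (k x)) =ᵐ[P] 0 := by
      rw [← integral_eq_zero_iff_of_nonneg_ae hφ_nonneg hφ_int, hφ_eq, h0]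
    have hk1 : ∀ᵐ x ∂P, k x = 1 := by
      filter_upwards [hφ0, hk_pos] with x hx hxpos
      by_contra hne
      have := Real.log_lt_sub_one_of_pos hxpos hne
      simp only [Pi.zero_apply] at hx
      linarith
    have hrn1 : Q.rnDeriv P =ᵐ[P] 1 := by
      filter_upwards [hk1, Measure.rnDeriv_lt_top Q P] with x hx hlt
      have : ENNReal.ofReal (k x) = Q.rnDeriv P x := ENNReal.ofReal_toReal hlt.ne
      rw [← this, hx]
      simp
    have : P.withDensity (Q.rnDeriv P) = P.withDensity 1 := withDensity_congr_ae hrn1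
    rw [Measure.withDensity_rnDeriv_eq Q P hQP, withDensity_one] at this
    exact this.symm

lemma auxS9_int_map {α β : Type*} [MeasurableSpace α] [MeasurableSpace β]
    {μ : Measure α} {T : α → β} (hT : Measurable T) {ρ : Measure β}
    (hρ : ρ = μ.map T) {f : β → ℝ} (hf : Measurable f) :
    Integrable f ρ ↔ Integrable (fun a => f (T a)) μ := by
  subst hρ
  exact
    integrable_map_measure hf.aestronglyMeasurable hT.aemeasurable

lemma auxS9_integral_map {α β : Type*} [MeasurableSpace α] [MeasurableSpace β]
    {μ : Measure α} {T : α → β} (hT : Measurable T) {ρ : Measure β}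
    (hρ : ρ = μ.map T) {f : β → ℝ} (hf : Measurable f) :
    ∫ y, f y ∂ρ = ∫ a, f (T a) ∂μ := by
  subst hρ
  exact integral_map hT.aemeasurable hf.aestronglyMeasurable

/-- With `π ∈ Π(μ₀,μ₁)` equivalent to `ρ = ℙ₀∘(X₀,X₁)⁻¹`,
`ζ := (dπ/dρ)(X₀,X₁)` satisfying `E^{ℙ₀}[|ln ζ| + ζ²] < ∞`, and `P̂` defined by
`dP̂/dℙ₀ = ζ`, the measure `P̂` is the unique minimizer of `H(·|ℙ₀)` over
`P_π := {P ∈ P₂(μ₀,μ₁) : P∘(X₀,X₁)⁻¹ = π}`, with minimal value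
`H(P̂|ℙ₀) = H(π|ρ)`. -/
theorem stmt_9 {d : ℕ} {Ω : Type*} {m0 : MeasurableSpace Ω}
    (ℙ₀ : Measure Ω) [IsProbabilityMeasure ℙ₀]
    (μ₀ μ₁ : Measure (EuclideanSpace ℝ (Fin d)))
    [IsProbabilityMeasure μ₀] [IsProbabilityMeasure μ₁]
    (X0 X1 : Ω → EuclideanSpace ℝ (Fin d))
    (hX0 : Measurable X0) (hX1 : Measurable X1)
    (hμ₀ : ℙ₀.map X0 = μ₀)
    (ρ π : Measure (EuclideanSpace ℝ (Fin d) × EuclideanSpace ℝ (Fin d)))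
    [IsProbabilityMeasure π]
    (hρ : ρ = ℙ₀.map (fun ω => (X0 ω, X1 ω)))
    (hequiv : π ≪ ρ ∧ ρ ≪ π)
    (hπ0 : π.map Prod.fst = μ₀) (hπ1 : π.map Prod.snd = μ₁)
    (ζ : Ω → ℝ)
    (hζ : ζ = fun ω => (π.rnDeriv ρ (X0 ω, X1 ω)).toReal)
    (hζint : Integrable (fun ω => |Real.log (ζ ω)| + ζ ω ^ 2) ℙ₀)
    (Phat : Measure Ω)
    (hPhat : Phat = ℙ₀.withDensity (fun ω => ENNReal.ofReal (ζ ω)))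
    -- the set `P₂(μ₀,μ₁)` and its subset `P_π`
    (P₂ Pπ : Set (Measure Ω))
    (hP₂ : P₂ = {P : Measure Ω | IsProbabilityMeasure P ∧ (P ≪ ℙ₀ ∧ ℙ₀ ≪ P)
      ∧ P.map X0 = μ₀ ∧ P.map X1 = μ₁
      ∧ Integrable (fun ω => Real.log ((P.rnDeriv ℙ₀ ω).toReal)) ℙ₀
      ∧ Integrable (fun ω => ((P.rnDeriv ℙ₀ ω).toReal) ^ 2) ℙ₀})
    (hPπ : Pπ = {P ∈ P₂ | P.map (fun ω => (X0 ω, X1 ω)) = π}) :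
    Phat ∈ Pπ ∧
    relEnt Phat ℙ₀ = relEnt π ρ ∧
    (∀ P ∈ Pπ, relEnt Phat ℙ₀ ≤ relEnt P ℙ₀) ∧
    (∀ P ∈ Pπ, relEnt P ℙ₀ = relEnt Phat ℙ₀ → P = Phat) := by
  obtain ⟨hπρ, hρπ⟩ := hequiv
  have hT : Measurable fun ω => (X0 ω, X1 ω) := hX0.prodMk hX1
  have hg₀_meas : Measurable (π.rnDeriv ρ) := Measure.measurable_rnDeriv π ρ
  have hgπ_meas : Measurable fun p => (π.rnDeriv ρ p).toReal := hg₀_meas.ennreal_toReal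
  haveI hρ_prob : IsProbabilityMeasure ρ := by
    rw [hρ]; exact Measure.isProbabilityMeasure_map hT.aemeasurable
  haveI : SigmaFinite ρ := inferInstance
  haveI : π.HaveLebesgueDecomposition ρ := inferInstance
  have h_pf : ∀ᵐ p ∂ρ, 0 < π.rnDeriv ρ p ∧ π.rnDeriv ρ p < ⊤ :=
    (Measure.rnDeriv_pos' hρπ).and (Measure.rnDeriv_lt_top π ρ)
  have h_aeΩ : ∀ᵐ ω ∂ℙ₀, 0 < π.rnDeriv ρ (X0 ω, X1 ω) ∧ π.rnDeriv ρ (X0 ω, X1 ω) < ⊤ := by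
    have hset : MeasurableSet {p : EuclideanSpace ℝ (Fin d) × EuclideanSpace ℝ (Fin d) |
        0 < π.rnDeriv ρ p ∧ π.rnDeriv ρ p < ⊤} :=
      (hg₀_meas measurableSet_Ioi).inter (hg₀_meas measurableSet_Iio)
    refine (ae_map_iff (p := fun p => 0 < π.rnDeriv ρ p ∧ π.rnDeriv ρ p < ⊤)
      hT.aemeasurable hset).mp ?_
    rw [← hρ]
    exact h_pf
  have hζ_pos : ∀ᵐ ω ∂ℙ₀, 0 < ζ ω := by
    filter_upwards [h_aeΩ] with ω hω
    simp only [hζ]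
    exact ENNReal.toReal_pos hω.1.ne' hω.2.ne
  have hζ_nonneg : ∀ ω, 0 ≤ ζ ω := by
    intro ω; simp only [hζ]; exact ENNReal.toReal_nonneg
  have hζ_meas : Measurable ζ := by
    rw [hζ]; exact hgπ_meas.comp hT
  have hofReal : (fun ω => ENNReal.ofReal (ζ ω)) =ᵐ[ℙ₀] fun ω => π.rnDeriv ρ (X0 ω, X1 ω) := by
    filter_upwards [h_aeΩ] with ω hω
    simp only [hζ]
    exact ENNReal.ofReal_toReal hω.2.ne
  have hPhat' : Phat = ℙ₀.withDensity (fun ω => π.rnDeriv ρ (X0 ω, X1 ω)) := by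
    rw [hPhat]; exact withDensity_congr_ae hofReal
  have hcomp_meas : Measurable fun ω => π.rnDeriv ρ (X0 ω, X1 ω) := hg₀_meas.comp hT
  have hmapT : Phat.map (fun ω => (X0 ω, X1 ω)) = π := by
    ext s hs
    rw [Measure.map_apply hT hs, hPhat', withDensity_apply _ (hT hs),
      ← setLIntegral_map hs hg₀_meas hT, ← hρ,
      ← withDensity_apply _ hs, Measure.withDensity_rnDeriv_eq π ρ hπρ]
  haveI hPhat_prob : IsProbabilityMeasure Phat := by
    constructor
    have h1 : Phat.map (fun ω => (X0 ω, X1 ω)) Set.univ = 1 := by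
      rw [hmapT]; exact measure_univ
    rwa [Measure.map_apply hT MeasurableSet.univ, Set.preimage_univ] at h1
  have hPhat_ac : Phat ≪ ℙ₀ := by
    rw [hPhat]; exact withDensity_absolutelyContinuous _ _
  have hac' : ℙ₀ ≪ Phat := by
    rw [hPhat']
    refine withDensity_absolutelyContinuous' hcomp_meas.aemeasurable ?_
    filter_upwards [h_aeΩ] with ω hω using hω.1.ne'
  have hrn : Phat.rnDeriv ℙ₀ =ᵐ[ℙ₀] fun ω => π.rnDeriv ρ (X0 ω, X1 ω) := by
    rw [hPhat']; exact Measure.rnDeriv_withDensity ℙ₀ hcomp_meas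
  have hrnζ : (fun ω => (Phat.rnDeriv ℙ₀ ω).toReal) =ᵐ[ℙ₀] ζ := by
    filter_upwards [hrn] with ω hω
    rw [hω]; simp only [hζ]
  -- integrability facts for ζ
  have habs : Integrable (fun ω => |Real.log (ζ ω)|) ℙ₀ := by
    refine hζint.mono' hζ_meas.log.abs.aestronglyMeasurable ?_
    refine Filter.Eventually.of_forall fun ω => ?_
    rw [Real.norm_eq_abs, abs_abs]
    nlinarith [sq_nonneg (ζ ω)]
  have hsq : Integrable (fun ω => ζ ω ^ 2) ℙ₀ := by
    refine hζint.mono' ((hζ_meas.pow_const 2).aestronglyMeasurable) ?_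
    refine Filter.Eventually.of_forall fun ω => ?_
    rw [Real.norm_eq_abs, abs_of_nonneg (sq_nonneg _)]
    nlinarith [abs_nonneg (Real.log (ζ ω))]
  have hlogζ_int : Integrable (fun ω => Real.log (ζ ω)) ℙ₀ := by
    refine habs.mono' hζ_meas.log.aestronglyMeasurable ?_
    exact Filter.Eventually.of_forall fun ω => le_of_eq (Real.norm_eq_abs _)
  have hζlog_abs : Integrable (fun ω => ζ ω * |Real.log (ζ ω)|) ℙ₀ := by
    refine hζint.mono' ((hζ_meas.mul hζ_meas.log.abs).aestronglyMeasurable) ?_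
    refine Filter.Eventually.of_forall fun ω => ?_
    rw [Real.norm_eq_abs, abs_of_nonneg (mul_nonneg (hζ_nonneg ω) (abs_nonneg _))]
    exact auxS9_mul_abs_log_le (hζ_nonneg ω)
  -- integrability on ρ and π
  have hρint : Integrable
      (fun p => (π.rnDeriv ρ p).toReal * |Real.log ((π.rnDeriv ρ p).toReal)|) ρ := by
    rw [auxS9_int_map (f := fun p => (π.rnDeriv ρ p).toReal * |Real.log ((π.rnDeriv ρ p).toReal)|) hT hρ (hgπ_meas.mul hgπ_meas.log.abs)]
    have : (fun a => (π.rnDeriv ρ (X0 a, X1 a)).toReal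
        * |Real.log ((π.rnDeriv ρ (X0 a, X1 a)).toReal)|)
        = fun ω => ζ ω * |Real.log (ζ ω)| := by
      funext ω; simp only [hζ]
    rw [this]; exact hζlog_abs
  have hπlog_int : Integrable (fun p => Real.log ((π.rnDeriv ρ p).toReal)) π := by
    refine (integrable_rnDeriv_smul_iff hπρ).mp ?_
    refine hρint.mono' ((hgπ_meas.mul hgπ_meas.log).aestronglyMeasurable) ?_
    refine Filter.Eventually.of_forall fun p => ?_
    rw [smul_eq_mul, Real.norm_eq_abs, abs_mul, abs_of_nonneg ENNReal.toReal_nonneg]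
  -- the value Ihat
  set Ihat : ℝ := ∫ ω, ζ ω * Real.log (ζ ω) ∂ℙ₀ with hIhat_def
  -- llr of Phat wrt ℙ₀
  have hhat_int : Integrable
      (fun ω => (Phat.rnDeriv ℙ₀ ω).toReal * |Real.log ((Phat.rnDeriv ℙ₀ ω).toReal)|) ℙ₀ := by
    refine hζlog_abs.congr ?_
    filter_upwards [hrnζ] with ω hω
    rw [hω]
  obtain ⟨hllr_hat_int, hllr_hat_eq⟩ := auxS9_llr_integral hPhat_ac hhat_int
  have hIhat_eq : ∫ ω, llr Phat ℙ₀ ω ∂Phat = Ihat := by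
    rw [hllr_hat_eq, hIhat_def]
    refine integral_congr_ae ?_
    filter_upwards [hrnζ] with ω hω
    rw [hω]
  -- llr of π wrt ρ
  obtain ⟨hllr_π_int', hllr_π_eq⟩ := auxS9_llr_integral hπρ hρint
  have hIπ : ∫ p, llr π ρ p ∂π = Ihat := by
    rw [hllr_π_eq,
      auxS9_integral_map (f := fun p => (π.rnDeriv ρ p).toReal * Real.log ((π.rnDeriv ρ p).toReal)) hT hρ (hgπ_meas.mul hgπ_meas.log), hIhat_def]
    refine integral_congr_ae (Filter.Eventually.of_forall fun ω => ?_)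
    simp only [hζ]
  have hrelhat : relEnt Phat ℙ₀ = ENNReal.ofReal Ihat := by
    rw [relEnt, if_pos ⟨hPhat_ac, hllr_hat_int⟩, hIhat_eq]
  have hrelπ : relEnt π ρ = ENNReal.ofReal Ihat := by
    rw [relEnt, if_pos ⟨hπρ, hllr_π_int'⟩, hIπ]
  -- nonnegativity of Ihat
  have hIhat_nonneg : 0 ≤ Ihat := by
    rw [← hIhat_eq]
    exact (auxS9_gibbs hPhat_ac hac' hllr_hat_int).1
  -- cross term for a measure pushing forward to π
  have hkey : ∀ (Q : Measure Ω), Q.map (fun ω => (X0 ω, X1 ω)) = π →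
      Integrable (fun ω => Real.log (ζ ω)) Q ∧
      ∫ ω, Real.log (ζ ω) ∂Q = ∫ p, Real.log ((π.rnDeriv ρ p).toReal) ∂π := by
    intro Q hQ
    have h1 := auxS9_int_map hT hQ.symm hgπ_meas.log
    have h2 := auxS9_integral_map hT hQ.symm hgπ_meas.log
    have h3 : (fun a => Real.log ((π.rnDeriv ρ (X0 a, X1 a)).toReal))
        = fun ω => Real.log (ζ ω) := by
      funext ω; simp only [hζ]
    rw [h3] at h1 h2
    exact ⟨h1.mp hπlog_int, h2.symm⟩
  have hcrossPhat : ∫ ω, Real.log (ζ ω) ∂Phat = Ihat := by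
    rw [← integral_rnDeriv_smul hPhat_ac, hIhat_def]
    refine integral_congr_ae ?_
    filter_upwards [hrnζ] with ω hω
    rw [smul_eq_mul, hω]
  -- membership of Phat in Pπ
  have hPhat_memP₂ : Phat ∈ P₂ := by
    rw [hP₂]
    refine ⟨hPhat_prob, ⟨hPhat_ac, hac'⟩, ?_, ?_, ?_, ?_⟩
    · show Phat.map (Prod.fst ∘ fun ω => (X0 ω, X1 ω)) = μ₀
      rw [← Measure.map_map measurable_fst hT, hmapT, hπ0]
    · show Phat.map (Prod.snd ∘ fun ω => (X0 ω, X1 ω)) = μ₁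
      rw [← Measure.map_map measurable_snd hT, hmapT, hπ1]
    · refine hlogζ_int.congr ?_
      filter_upwards [hrnζ] with ω hω
      rw [hω]
    · refine hsq.congr ?_
      filter_upwards [hrnζ] with ω hω
      rw [hω]
  have hPhat_mem : Phat ∈ Pπ := by
    rw [hPπ]; exact ⟨hPhat_memP₂, hmapT⟩
  -- the main estimate for arbitrary P ∈ Pπ
  have hmain : ∀ P ∈ Pπ, ∃ IP : ℝ,
      relEnt P ℙ₀ = ENNReal.ofReal IP ∧ Ihat ≤ IP ∧ (IP ≤ Ihat → P = Phat) := by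
    intro P hP
    rw [hPπ] at hP
    obtain ⟨hPmem, hPT⟩ := hP
    rw [hP₂] at hPmem
    obtain ⟨hPprob, ⟨hPac, hacP⟩, hPX0, hPX1, hPlog, hPsq⟩ := hPmem
    haveI := hPprob
    have hgP_meas : Measurable fun ω => (P.rnDeriv ℙ₀ ω).toReal :=
      (Measure.measurable_rnDeriv P ℙ₀).ennreal_toReal
    have hPmul : Integrable
        (fun ω => (P.rnDeriv ℙ₀ ω).toReal * |Real.log ((P.rnDeriv ℙ₀ ω).toReal)|) ℙ₀ := by
      refine (hPlog.abs.add hPsq).mono'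
        ((hgP_meas.mul hgP_meas.log.abs).aestronglyMeasurable) ?_
      refine Filter.Eventually.of_forall fun ω => ?_
      rw [Real.norm_eq_abs, abs_of_nonneg (mul_nonneg ENNReal.toReal_nonneg (abs_nonneg _))]
      exact auxS9_mul_abs_log_le ENNReal.toReal_nonneg
    obtain ⟨hllrP_int, hllrP_eq⟩ := auxS9_llr_integral hPac hPmul
    refine ⟨∫ ω, (P.rnDeriv ℙ₀ ω).toReal * Real.log ((P.rnDeriv ℙ₀ ω).toReal) ∂ℙ₀, ?_, ?_, ?_⟩
    · rw [relEnt, if_pos ⟨hPac, hllrP_int⟩, hllrP_eq]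
    all_goals {
      have hPPhat : P ≪ Phat := hPac.trans hac'
      have hPhatP : Phat ≪ P := hPhat_ac.trans hacP
      have hlogζP_int : Integrable (fun ω => Real.log (ζ ω)) P := (hkey P hPT).1
      have hcrossP : ∫ ω, Real.log (ζ ω) ∂P = Ihat := by
        rw [(hkey P hPT).2, ← (hkey Phat hmapT).2, hcrossPhat]
      have hdecomp : llr P Phat =ᵐ[P] fun ω => llr P ℙ₀ ω - Real.log (ζ ω) := by
        have hmul := Measure.rnDeriv_mul_rnDeriv hPPhat (κ := ℙ₀)
        filter_upwards [hPac.ae_le hmul, Measure.rnDeriv_pos hPPhat,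
          hPPhat.ae_le (Measure.rnDeriv_lt_top P Phat), hPac.ae_le hrnζ,
          hPac.ae_le hζ_pos] with ω hmulω hapos haf hbζ hζposω
        have ha' : (P.rnDeriv Phat ω).toReal ≠ 0 :=
          (ENNReal.toReal_pos hapos.ne' haf.ne).ne'
        have hb' : (Phat.rnDeriv ℙ₀ ω).toReal ≠ 0 := by
          rw [hbζ]; exact hζposω.ne'
        show Real.log ((P.rnDeriv Phat ω).toReal)
            = Real.log ((P.rnDeriv ℙ₀ ω).toReal) - Real.log (ζ ω)
        rw [← hmulω]
        simp only [Pi.mul_apply]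
        rw [ENNReal.toReal_mul, Real.log_mul ha' hb', hbζ]
        ring
      have hllrPPhat_int : Integrable (llr P Phat) P :=
        (hllrP_int.sub hlogζP_int).congr hdecomp.symm
      have hintval : ∫ ω, llr P Phat ω ∂P
          = (∫ ω, (P.rnDeriv ℙ₀ ω).toReal * Real.log ((P.rnDeriv ℙ₀ ω).toReal) ∂ℙ₀) - Ihat := by
        rw [integral_congr_ae hdecomp, integral_sub hllrP_int hlogζP_int, hllrP_eq, hcrossP]
      obtain ⟨hge, heq⟩ := auxS9_gibbs hPPhat hPhatP hllrPPhat_int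
      rw [hintval] at hge heq
      first
      | linarith
      | { intro hle
          exact heq (by linarith) }
    }
  refine ⟨hPhat_mem, hrelhat.trans hrelπ.symm, ?_, ?_⟩
  · intro P hP
    obtain ⟨IP, hIP, hle, _⟩ := hmain P hP
    rw [hIP, hrelhat]
    exact ENNReal.ofReal_le_ofReal hle
  · intro P hP hPeq
    obtain ⟨IP, hIP, hle, huniq⟩ := hmain P hP
    rw [hIP, hrelhat] at hPeq
    have hIP_nonneg : 0 ≤ IP := le_trans hIhat_nonneg hle
    have : IP = Ihat := by
      rw [ENNReal.ofReal_eq_ofReal_iff hIP_nonneg hIhat_nonneg] at hPeq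
      exact hPeq
    exact huniq this.le
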